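/- For every positive integer a with n = ⌊√a⌋, a = n^2+b, m = n+1, a = m^2−c, we have σ(a) ≥ ⌊max{(n+√(a+1))/(b+1), (m+√a)/c}⌋ + 1. -/
import Mathlib


noncomputable def sigmaN (a : ℕ) : ℕ :=
  sInf {s : ℕ | 0 < s ∧ ∃ t : ℕ, 0 < t ∧ s^2 * a < t^2 ∧ t^2 < s^2 * (a+1)}

set_option maxHeartbeats 1000000 in
theorem stmt_13 (a n b m c : ℕ) (ha : 0 < a) (hn : n = Nat.sqrt a)
    (hab : a = n^2 + b) (hm : m = n + 1) (hac : a + c = m^2) :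
    ⌊max (((n : ℝ) + Real.sqrt (a+1)) / (b+1)) (((m : ℝ) + Real.sqrt a) / c)⌋₊ + 1
      ≤ sigmaN a := by
  have han : n^2 ≤ a := by rw [hn]; exact Nat.sqrt_le' a
  have ham : a < m^2 := by
    rw [hm, hn, pow_two]; exact Nat.lt_succ_sqrt a
  have hc0 : 0 < c := by omega
  have ham1 : a + 1 ≤ m^2 := by omega
  -- Nonemptiness of the defining set
  have hne : {s : ℕ | 0 < s ∧ ∃ t : ℕ, 0 < t ∧ s^2 * a < t^2 ∧ t^2 < s^2 * (a+1)}.Nonempty := by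
    refine ⟨2*n+3, ?_⟩
    simp only [Set.mem_setOf_eq]
    set q : ℕ := Nat.sqrt ((2*n+3)^2*a) with hqdef
    refine ⟨by omega, q + 1, by omega, ?_, ?_⟩
    · have h := Nat.lt_succ_sqrt ((2*n+3)^2*a)
      rw [← hqdef] at h
      calc (2*n+3)^2*a < q.succ * q.succ := h
        _ = (q + 1)^2 := by rw [Nat.succ_eq_add_one]; ring
    · have hq : q < (2*n+3)*(n+1) := by
        rw [hqdef, Nat.sqrt_lt]
        have h1 : a < (n+1)^2 := by rw [hm] at ham; exact ham
        nlinarith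
      have hq2 : q^2 ≤ (2*n+3)^2*a := hqdef ▸ Nat.sqrt_le' _
      clear_value q
      nlinarith
  unfold sigmaN
  have hmem := Nat.sInf_mem hne
  set s : ℕ := sInf {s : ℕ | 0 < s ∧ ∃ t : ℕ, 0 < t ∧ s^2 * a < t^2 ∧ t^2 < s^2 * (a+1)} with hsdef
  simp only [Set.mem_setOf_eq] at hmem
  clear_value s
  clear hsdef hne
  obtain ⟨hs0, t, ht0, ht1, ht2⟩ := hmem
  -- basic ℕ inequalities
  have htn : s*n < t := by
    by_contra h
    push_neg at h
    have e : t*t ≤ (s*n)*(s*n) := Nat.mul_le_mul h h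
    have e2 : s^2*n^2 ≤ s^2*a := Nat.mul_le_mul_left _ han
    have e3 : (s*n)*(s*n) = s^2*n^2 := by ring
    have e4 : t^2 = t*t := sq t
    linarith
  have htm : t < s*m := by
    by_contra h
    push_neg at h
    have e : (s*m)*(s*m) ≤ t*t := Nat.mul_le_mul h h
    have e2 : s^2*(a+1) ≤ s^2*m^2 := Nat.mul_le_mul_left _ ham1
    have e3 : (s*m)*(s*m) = s^2*m^2 := by ring
    have e4 : t^2 = t*t := sq t
    linarith
  have h1 : s*n + t < s^2*(b+1) := by
    have eA : s*n*(s*n) + (s*n + t) ≤ t*t := by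
      have e1 : (s*n+1)*t ≤ t*t := Nat.mul_le_mul_right t htn
      have e2 : s*n*(s*n+1) ≤ s*n*t := Nat.mul_le_mul_left _ htn
      nlinarith
    have eB : t*t < s*n*(s*n) + s^2*(b+1) := by
      have e3 : s^2*(a+1) = s*n*(s*n) + s^2*(b+1) := by rw [hab]; ring
      have e4 : t^2 = t*t := sq t
      linarith
    linarith
  have h2 : s*m + t < s^2*c := by
    have eA : t*t + (s*m + t) ≤ (s*m)*(s*m) := by
      have e1 : (t+1)*(s*m) ≤ (s*m)*(s*m) := Nat.mul_le_mul_right _ htm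
      have e2 : t*(t+1) ≤ t*(s*m) := Nat.mul_le_mul_left _ htm
      nlinarith
    have eB : (s*m)*(s*m) = s^2*a + s^2*c := by rw [show s^2*a + s^2*c = s^2*(a+c) by ring, hac]; ring
    have e4 : t^2 = t*t := sq t
    linarith
  -- real versions
  have hs0R : (0:ℝ) < s := by exact_mod_cast hs0
  have hta : (s:ℝ) * Real.sqrt a < t := by
    have h0 : Real.sqrt ((s:ℝ)^2 * a) < t :=
      (Real.sqrt_lt' (by exact_mod_cast ht0)).mpr (by exact_mod_cast ht1)
    rwa [Real.sqrt_mul (by positivity) _, Real.sqrt_sq hs0R.le] at h0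
  rw [Nat.add_one_le_iff, Nat.floor_lt (le_max_of_le_right (by positivity)), max_lt_iff]
  constructor
  · -- first bound, by contradiction
    by_contra hx
    push_neg at hx
    rw [le_div_iff₀ (by positivity)] at hx
    have h1r : (n:ℝ) + Real.sqrt a < (s:ℝ)*((b:ℝ)+1) := by
      have h1c : (s:ℝ)*n + t < (s:ℝ)^2*((b:ℝ)+1) := by exact_mod_cast h1
      have key : (s:ℝ) * ((n:ℝ) + Real.sqrt a) < (s:ℝ) * ((s:ℝ)*((b:ℝ)+1)) := by
        have e1 : (s:ℝ) * ((n:ℝ) + Real.sqrt a) = (s:ℝ)*n + (s:ℝ)*Real.sqrt a := by ring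
        have e2 : (s:ℝ) * ((s:ℝ)*((b:ℝ)+1)) = (s:ℝ)^2*((b:ℝ)+1) := by ring
        rw [e1, e2]; linarith
      exact lt_of_mul_lt_mul_left key (le_of_lt hs0R)
    set u : ℕ := s*(b+1) with hu
    have huR : ((u:ℕ):ℝ) = (s:ℝ)*((b:ℝ)+1) := by rw [hu]; push_cast; ring
    have hun : n < u := by
      have : (n:ℝ) < (u:ℝ) := by
        rw [huR]
        have := Real.sqrt_nonneg (a:ℝ)
        linarith
      exact_mod_cast this
    set v : ℕ := u - n with hv
    have hvR : (v:ℝ) = (u:ℝ) - (n:ℝ) := by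
      rw [hv]; push_cast [Nat.cast_sub hun.le]; ring
    have hva : Real.sqrt a < (v:ℝ) := by rw [hvR, huR]; linarith
    have hvb : (v:ℝ) ≤ Real.sqrt (a+1) := by
      rw [hvR, huR]
      have hx' : (s:ℝ) * ((b:ℝ)+1) ≤ (n:ℝ) + Real.sqrt ((a:ℝ)+1) := by push_cast at hx ⊢; linarith
      linarith
    have hv0 : (0:ℝ) < (v:ℝ) := lt_of_le_of_lt (Real.sqrt_nonneg _) hva
    have hva' : a < v^2 := by
      have := (Real.sqrt_lt' hv0).mp hva
      exact_mod_cast this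
    have hvb' : v^2 ≤ a + 1 := by
      have : ((v:ℝ))^2 ≤ (a:ℝ)+1 := (Real.le_sqrt (le_of_lt hv0) (by positivity)).mp hvb
      exact_mod_cast this
    have hveq : v^2 = a + 1 := le_antisymm hvb' hva'
    have hnv : n < v := by
      by_contra h
      push_neg at h
      have : v^2 ≤ n^2 := Nat.pow_le_pow_left h 2
      linarith
    have hvm : v ≤ n + 1 := by
      by_contra h
      push_neg at h
      have : m^2 < v^2 := by
        have : m < v := by omega
        exact Nat.pow_lt_pow_left this (by norm_num)
      linarith
    have hvval : v = n + 1 := by omega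
    have hb2n : b = 2*n := by
      have e1 : (n+1)^2 = a + 1 := by rw [← hvval]; exact hveq
      have e2 : (n+1)^2 = n^2 + 2*n + 1 := by ring
      linarith
    have heq : s * (2*n+1) = 1 * (2*n+1) := by
      have e1 : u = s*(2*n+1) := by rw [hu, hb2n]
      have e2 : u = 2*n + 1 := by omega
      linarith
    have hs1 : s = 1 := Nat.eq_of_mul_eq_mul_right (by omega) heq
    rw [hs1, one_pow, one_mul] at ht1 ht2
    linarith
  · -- second bound
    rw [div_lt_iff₀ (by exact_mod_cast hc0)]
    have h2c : (s:ℝ)*m + t < (s:ℝ)^2*c := by exact_mod_cast h2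
    have key : (s:ℝ) * ((m:ℝ) + Real.sqrt a) < (s:ℝ) * ((s:ℝ)*c) := by
      have e1 : (s:ℝ) * ((m:ℝ) + Real.sqrt a) = (s:ℝ)*m + (s:ℝ)*Real.sqrt a := by ring
      have e2 : (s:ℝ) * ((s:ℝ)*(c:ℝ)) = (s:ℝ)^2*c := by ring
      rw [e1, e2]; linarith
    exact lt_of_mul_lt_mul_left key (le_of_lt hs0R)
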